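/- Let P be a finite poset and q a positive integer such that δ(p) + ν(p) + 1 ≤ q for every p ∈ P. Then the map R assigning to each p the integer interval R(p) = {1+δ(p), 2+δ(p), …, q−ν(p)} is a consistent restriction function, and Inc_R(P) = Inc_q(P); in particular every f ∈ Inc_q(P) satisfies 1+δ(p) ≤ f(p) ≤ q−ν(p) for all p. -/

import Mathlib

/-- `δ(p)`: the maximum number of elements strictly below `p` in a chain of
`P` through `p`, i.e. the length of a longest chain in `{x | x < p}`. -/
noncomputable def deltaP {P : Type*} [PartialOrder P] (p : P) : ℕ :=
  (Set.chainHeight {x : P | x < p} (· < ·)).toNat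

/-- `ν(p)`: the maximum number of elements strictly above `p` in a chain of
`P` through `p`, i.e. the length of a longest chain in `{x | p < x}`. -/
noncomputable def nuP {P : Type*} [PartialOrder P] (p : P) : ℕ :=
  (Set.chainHeight {x : P | p < x} (· < ·)).toNat

/-- An increasing labeling of the finite poset `P` with respect to the
restriction function `R`. -/
def IncLabel {P : Type*} [PartialOrder P] (R : P → Finset ℤ) (f : P → ℤ) : Prop :=
  (∀ p, f p ∈ R p) ∧ ∀ ⦃p₁ p₂ : P⦄, p₁ < p₂ → f p₁ < f p₂

/-- `R` is consistent: minima and maxima of the label sets strictly increase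
along covering relations. -/
def Consistent {P : Type*} [PartialOrder P] (R : P → Finset ℤ)
    (hR : ∀ p, (R p).Nonempty) : Prop :=
  ∀ x y : P, x ⋖ y →
    (R x).min' (hR x) < (R y).min' (hR y) ∧ (R x).max' (hR x) < (R y).max' (hR y)

section Aux

variable {P : Type*} [Fintype P] [PartialOrder P]

lemma chainHeight_ne_top (s : Set P) : s.chainHeight (· < ·) ≠ ⊤ :=
  Set.chainHeight_ne_top_of_finite s _ s.toFinite

lemma deltaP_lt {x y : P} (hxy : x < y) : deltaP x < deltaP y := by
  obtain ⟨t, hts, hte, htc⟩ :=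
    Set.exists_eq_chainHeight_of_finite {z : P | z < x} (· < ·) (Set.toFinite _)
  have hxt : x ∉ t := fun h => lt_irrefl x (hts h)
  have hsub : (insert x t) ⊆ {z : P | z < y} := by
    rintro z (rfl | hz)
    · exact hxy
    · exact lt_trans (hts hz) hxy
  have hc : IsChain (· < ·) (insert x t) :=
    htc.insert fun b hb _ => Or.inr (hts hb)
  have h1 : ({z : P | z < x}).chainHeight (· < ·) + 1
      ≤ ({z : P | z < y}).chainHeight (· < ·) := by
    rw [← hte, ← Set.encard_insert_of_notMem hxt]
    exact Set.encard_le_chainHeight_of_isChain _ _ hsub hc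
  rw [← ENat.coe_toNat (chainHeight_ne_top {z : P | z < x}),
    ← ENat.coe_toNat (chainHeight_ne_top {z : P | z < y})] at h1
  have : deltaP x + 1 ≤ deltaP y := by exact_mod_cast h1
  omega

lemma deltaP_dual (p : P) : deltaP (OrderDual.toDual p) = nuP p := by
  unfold deltaP nuP
  congr 1
  exact Set.chainHeight_flip (s := {x : P | p < x}) (r := (· < ·))

lemma lower_bound {f : P → ℤ} (hmono : ∀ ⦃p₁ p₂ : P⦄, p₁ < p₂ → f p₁ < f p₂)
    (h1 : ∀ p, 1 ≤ f p) : ∀ p, (deltaP p : ℤ) < f p := by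
  suffices H : ∀ n, ∀ p : P, deltaP p = n → (deltaP p : ℤ) < f p from fun p => H _ p rfl
  intro n
  induction n using Nat.strong_induction_on with
  | _ n ih =>
    intro p hp
    rcases Nat.eq_zero_or_pos n with h0 | hpos
    · rw [hp, h0]
      exact lt_of_lt_of_le zero_lt_one (h1 p)
    · have hle : (n : ℕ∞) ≤ ({z : P | z < p}).chainHeight (· < ·) := by
        rw [← ENat.coe_toNat (chainHeight_ne_top {z : P | z < p})]
        exact_mod_cast hp.ge
      obtain ⟨t, hts, hlen, htc⟩ := Set.exists_isChain_of_le_chainHeight n hle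
      have hne : t.Nonempty := by
        rw [Set.nonempty_iff_ne_empty]
        intro e; rw [e, Set.encard_empty] at hlen; norm_cast at hlen; omega
      obtain ⟨x, hxm⟩ := t.toFinite.exists_maximal hne
      have hxt : x ∈ t := hxm.prop
      have hxp : x < p := hts hxt
      have hlast : ∀ z ∈ t \ {x}, z < x := by
        intro z hz
        rcases htc hz.1 hxt hz.2 with h | h
        · exact h
        · exact absurd h (not_lt_of_ge (hxm.le_of_ge hz.1 h.le))
      have hdx : (n - 1 : ℕ) ≤ deltaP x := by
        have := Set.encard_le_chainHeight_of_isChain {z : P | z < x} (t \ {x}) hlast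
          (htc.mono Set.diff_subset)
        have he := Set.encard_diff_singleton_add_one hxt
        rw [hlen, ← ENat.coe_toNat ((t.toFinite.diff (t := {x})).encard_lt_top.ne)] at he
        rw [← ENat.coe_toNat ((t.toFinite.diff (t := {x})).encard_lt_top.ne),
          ← ENat.coe_toNat (chainHeight_ne_top {z : P | z < x})] at this
        have he' : ((t \ {x}).encard.toNat : ℕ) + 1 = n := by exact_mod_cast he
        have : (t \ {x}).encard.toNat ≤ deltaP x := by exact_mod_cast this
        omega
      have hdx2 : deltaP x < n := hp ▸ deltaP_lt hxp
      have hih : (deltaP x : ℤ) < f x := ih (deltaP x) hdx2 x rfl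
      have := hmono hxp
      rw [hp]
      have : deltaP x = n - 1 := by omega
      push_cast [this] at hih ⊢
      have hfx : f x < f p := hmono hxp
      omega

lemma upper_bound {f : P → ℤ} (hmono : ∀ ⦃p₁ p₂ : P⦄, p₁ < p₂ → f p₁ < f p₂)
    {q : ℕ} (hq : ∀ p, f p ≤ (q : ℤ)) : ∀ p, f p ≤ (q : ℤ) - (nuP p : ℤ) := by
  intro p
  set g : Pᵒᵈ → ℤ := fun x => (q : ℤ) + 1 - f (OrderDual.ofDual x) with hg
  have hgm : ∀ ⦃p₁ p₂ : Pᵒᵈ⦄, p₁ < p₂ → g p₁ < g p₂ := by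
    intro p₁ p₂ h
    have : OrderDual.ofDual p₂ < OrderDual.ofDual p₁ := h
    have := hmono this
    simp only [hg]
    omega
  have hg1 : ∀ x : Pᵒᵈ, 1 ≤ g x := by
    intro x
    have := hq (OrderDual.ofDual x)
    simp only [hg]
    omega
  have := lower_bound hgm hg1 (OrderDual.toDual p)
  rw [deltaP_dual] at this
  simp only [hg, OrderDual.ofDual_toDual] at this
  omega

end Aux

/-- If every chain through `p` has at most `q` elements (`δ(p)+ν(p)+1 ≤ q`),
then `R(p) = [1+δ(p), q−ν(p)]` is a consistent restriction function, and the
increasing labelings restricted by `R` are exactly the increasing labelings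
with values in `[1,q]`; in particular every `f ∈ Inc_q(P)` satisfies
`1+δ(p) ≤ f p ≤ q−ν(p)`. -/
theorem stmt8 {P : Type*} [Fintype P] [PartialOrder P] (q : ℕ) (hq : 0 < q)
    (hch : ∀ p : P, deltaP p + nuP p + 1 ≤ q) :
    ∃ hne : ∀ p : P, (Finset.Icc (1 + (deltaP p : ℤ)) ((q : ℤ) - (nuP p : ℤ))).Nonempty,
      Consistent (fun p => Finset.Icc (1 + (deltaP p : ℤ)) ((q : ℤ) - (nuP p : ℤ))) hne ∧
      ∀ f : P → ℤ,
        IncLabel (fun p => Finset.Icc (1 + (deltaP p : ℤ)) ((q : ℤ) - (nuP p : ℤ))) f ↔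
          ((∀ p : P, 1 ≤ f p ∧ f p ≤ (q : ℤ)) ∧
            ∀ ⦃p₁ p₂ : P⦄, p₁ < p₂ → f p₁ < f p₂) := by
  have hle : ∀ p : P, 1 + (deltaP p : ℤ) ≤ (q : ℤ) - (nuP p : ℤ) := by
    intro p; have := hch p; push_cast; omega
  have hne : ∀ p : P, (Finset.Icc (1 + (deltaP p : ℤ)) ((q : ℤ) - (nuP p : ℤ))).Nonempty :=
    fun p => Finset.nonempty_Icc.mpr (hle p)
  refine ⟨hne, ?_, ?_⟩
  · intro x y hxy
    have hlt : x < y := hxy.lt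
    have hmin : ∀ p : P, (Finset.Icc (1 + (deltaP p : ℤ)) ((q : ℤ) - (nuP p : ℤ))).min' (hne p)
        = 1 + (deltaP p : ℤ) := by
      intro p
      refine le_antisymm (Finset.min'_le _ _ (Finset.mem_Icc.mpr ⟨le_refl _, hle p⟩)) ?_
      exact (Finset.mem_Icc.mp (Finset.min'_mem _ (hne p))).1
    have hmax : ∀ p : P, (Finset.Icc (1 + (deltaP p : ℤ)) ((q : ℤ) - (nuP p : ℤ))).max' (hne p)
        = (q : ℤ) - (nuP p : ℤ) := by
      intro p
      refine le_antisymm (Finset.mem_Icc.mp (Finset.max'_mem _ (hne p))).2 ?_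
      exact Finset.le_max' _ _ (Finset.mem_Icc.mpr ⟨hle p, le_refl _⟩)
    rw [hmin, hmin, hmax, hmax]
    have h1 : deltaP x < deltaP y := deltaP_lt hlt
    have h2 : nuP y < nuP x := by
      have := deltaP_lt (show OrderDual.toDual y < OrderDual.toDual x from hlt)
      rwa [deltaP_dual, deltaP_dual] at this
    constructor <;> [skip; skip] <;> push_cast <;> omega
  · intro f
    constructor
    · rintro ⟨hmem, hmono⟩
      refine ⟨fun p => ?_, hmono⟩
      have := Finset.mem_Icc.mp (hmem p)
      constructor
      · have h0 : (0 : ℤ) ≤ (deltaP p : ℤ) := Int.natCast_nonneg _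
        omega
      · have : (q : ℤ) - (nuP p : ℤ) ≤ (q : ℤ) := by
          have : (0 : ℤ) ≤ (nuP p : ℤ) := Int.natCast_nonneg _
          omega
        omega
    · rintro ⟨hbd, hmono⟩
      refine ⟨fun p => Finset.mem_Icc.mpr ⟨?_, ?_⟩, hmono⟩
      · have := lower_bound hmono (fun p => (hbd p).1) p
        omega
      · exact upper_bound hmono (fun p => (hbd p).2) p
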